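/- Implicit bias of normalized steepest descent with weight decay: for continuously differentiable L : ℝ^d → ℝ, positive step sizes with Σ_{t=1}^∞ η_t = ∞, if the iterates x_t = (1 − λη_t)x_{t−1} − η_t Δ_t (with Δ_t a steepest descent direction: ‖Δ_t‖ = 1, ⟨Δ_t, ∇L(x_{t−1})⟩ = ‖∇L(x_{t−1})‖_*) converge to some x_∞, then ‖x_∞‖ ≤ 1/λ and ⟨−λx_∞, ∇L(x_∞)⟩ = ‖∇L(x_∞)‖_*, i.e., x_∞ is a KKT point of min_{‖x‖ ≤ 1/λ} L(x). -/

import Mathlib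

open scoped RealInnerProductSpace BigOperators
open Filter Finset

/-- `N` is a norm on `ℝ^d`. -/
def IsNorm {d : ℕ} (N : EuclideanSpace ℝ (Fin d) → ℝ) : Prop :=
  (∀ x, N x = 0 ↔ x = 0) ∧ (∀ (c : ℝ) (x), N (c • x) = |c| * N x) ∧
    (∀ x y, N (x + y) ≤ N x + N y)

/-- `D` is the dual norm of `N`: `D g` is the maximum of `⟪g, x⟫` over the unit ball of `N`
(the supremum is attained in finite dimension). -/
def IsDualNorm {d : ℕ} (N D : EuclideanSpace ℝ (Fin d) → ℝ) : Prop :=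
  ∀ g, IsGreatest {r : ℝ | ∃ x, N x ≤ 1 ∧ r = ⟪g, x⟫} (D g)

/-- `g` is a subgradient of the convex function `f` at `x`. -/
def SubgradientAt {d : ℕ} (f : EuclideanSpace ℝ (Fin d) → ℝ)
    (x g : EuclideanSpace ℝ (Fin d)) : Prop :=
  ∀ y, f x + ⟪y - x, g⟫ ≤ f y

section Aux

variable {d : ℕ} {N : EuclideanSpace ℝ (Fin d) → ℝ}

lemma IsNorm.nonneg (hN : IsNorm N) (z : EuclideanSpace ℝ (Fin d)) : 0 ≤ N z := by
  have h0 : N 0 = 0 := (hN.1 0).2 rfl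
  have hneg : N (-z) = N z := by
    have := hN.2.1 (-1) z
    simpa using this
  have := hN.2.2 z (-z)
  simp [h0] at this
  linarith [this, hneg]

lemma IsNorm.neg (hN : IsNorm N) (z : EuclideanSpace ℝ (Fin d)) : N (-z) = N z := by
  have := hN.2.1 (-1) z
  simpa using this

lemma IsNorm.sum_le (hN : IsNorm N) (s : Finset (Fin d)) (f : Fin d → EuclideanSpace ℝ (Fin d)) :
    N (∑ i ∈ s, f i) ≤ ∑ i ∈ s, N (f i) := by
  classical
  induction s using Finset.cons_induction with
  | empty => simp [(hN.1 0).2 rfl]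
  | cons a s ha ih =>
    rw [Finset.sum_cons, Finset.sum_cons]
    exact le_trans (hN.2.2 _ _) (by linarith)

lemma IsNorm.upper (hN : IsNorm N) : ∃ C : ℝ, 0 ≤ C ∧ ∀ z, N z ≤ C * ‖z‖ := by
  classical
  set e : Fin d → EuclideanSpace ℝ (Fin d) := fun i => EuclideanSpace.single i (1 : ℝ)
  refine ⟨∑ i : Fin d, N (e i), Finset.sum_nonneg fun i _ => hN.nonneg _, fun z => ?_⟩
  have hz : ∑ i : Fin d, z i • e i = z := by
    have := (EuclideanSpace.basisFun (Fin d) ℝ).sum_repr z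
    simpa [e, EuclideanSpace.basisFun_apply, EuclideanSpace.basisFun_repr] using this
  calc N z = N (∑ i : Fin d, z i • e i) := by rw [hz]
    _ ≤ ∑ i : Fin d, N (z i • e i) := hN.sum_le _ _
    _ = ∑ i : Fin d, |z i| * N (e i) := by simp [hN.2.1]
    _ ≤ ∑ i : Fin d, ‖z‖ * N (e i) := by
        refine Finset.sum_le_sum fun i _ => mul_le_mul_of_nonneg_right ?_ (hN.nonneg _)
        have h1 : |z i| = |⟪z, e i⟫| := by
          simp [e, EuclideanSpace.inner_single_right]
        rw [h1]
        calc |⟪z, e i⟫| ≤ ‖z‖ * ‖e i‖ := abs_real_inner_le_norm _ _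
          _ = ‖z‖ := by simp [e]
    _ = (∑ i : Fin d, N (e i)) * ‖z‖ := by rw [← Finset.mul_sum, mul_comm]

lemma IsNorm.continuous (hN : IsNorm N) : Continuous N := by
  obtain ⟨C, hC0, hC⟩ := hN.upper
  have hlip : ∀ a b, N a - N b ≤ C * ‖a - b‖ := fun a b => by
    have h1 : N a ≤ N b + N (a - b) := by
      have := hN.2.2 b (a - b); simpa using this
    have := hC (a - b); linarith
  have : LipschitzWith (Real.toNNReal C) N := by
    refine LipschitzWith.of_dist_le_mul fun a b => ?_
    rw [Real.dist_eq, dist_eq_norm, Real.coe_toNNReal _ hC0]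
    rw [abs_sub_le_iff]
    constructor
    · exact hlip a b
    · have := hlip b a
      rwa [norm_sub_rev] at this
  exact this.continuous

lemma IsNorm.lower (hN : IsNorm N) : ∃ m : ℝ, 0 < m ∧ ∀ z, m * ‖z‖ ≤ N z := by
  rcases Nat.eq_zero_or_pos d with hd | hd
  · subst hd
    refine ⟨1, one_pos, fun z => ?_⟩
    have hz : z = 0 := Subsingleton.elim z 0
    simp [hz, (hN.1 0).2 rfl]
  · have hne : (Metric.sphere (0 : EuclideanSpace ℝ (Fin d)) 1).Nonempty := by
      refine ⟨EuclideanSpace.single ⟨0, hd⟩ (1 : ℝ), ?_⟩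
      simp
    obtain ⟨z0, hz0s, hz0min⟩ :=
      (isCompact_sphere (0 : EuclideanSpace ℝ (Fin d)) 1).exists_isMinOn hne
        hN.continuous.continuousOn
    have hz0norm : ‖z0‖ = 1 := by simpa using mem_sphere_zero_iff_norm.mp hz0s
    have hz0ne : z0 ≠ 0 := by
      intro h; rw [h] at hz0norm; simp at hz0norm
    have hm : 0 < N z0 := by
      rcases lt_or_eq_of_le (hN.nonneg z0) with h | h
      · exact h
      · exact absurd ((hN.1 z0).1 h.symm) hz0ne
    refine ⟨N z0, hm, fun z => ?_⟩
    rcases eq_or_ne z 0 with rfl | hz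
    · simp [(hN.1 0).2 rfl]
    · have hznorm : 0 < ‖z‖ := norm_pos_iff.mpr hz
      have hmem : ‖z‖⁻¹ • z ∈ Metric.sphere (0 : EuclideanSpace ℝ (Fin d)) 1 := by
        rw [mem_sphere_zero_iff_norm, norm_smul]
        simp [abs_of_pos (inv_pos.mpr hznorm), inv_mul_cancel₀ (ne_of_gt hznorm)]
      have h3' : N z0 ≤ N (‖z‖⁻¹ • z) := hz0min hmem
      have h2 : N (‖z‖⁻¹ • z) = ‖z‖⁻¹ * N z := by
        rw [hN.2.1, abs_of_pos (inv_pos.mpr hznorm)]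
      have h3 : N z0 ≤ ‖z‖⁻¹ * N z := h2 ▸ h3'
      calc N z0 * ‖z‖ ≤ (‖z‖⁻¹ * N z) * ‖z‖ :=
            mul_le_mul_of_nonneg_right h3 (le_of_lt hznorm)
        _ = N z := by field_simp

/-- Key limit lemma: if `v T - v (T-1) ≤ -(η T * u T)`, `u → l`, `v` converges,
`η > 0` and `∑ η = ∞`, then `l ≤ 0`. -/
lemma key_limit (η : ℕ → ℝ) (hη : ∀ t, 1 ≤ t → 0 < η t)
    (hdiv : Tendsto (fun T => ∑ t ∈ Icc 1 T, η t) atTop atTop)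
    (u v : ℕ → ℝ) (l l' : ℝ) (hu : Tendsto u atTop (nhds l))
    (hv : Tendsto v atTop (nhds l'))
    (hrec : ∀ T, 1 ≤ T → v T - v (T - 1) ≤ -(η T * u T)) : l ≤ 0 := by
  by_contra hl
  push_neg at hl
  obtain ⟨T0, hT0⟩ := eventually_atTop.mp (hu.eventually (eventually_ge_nhds (by linarith : l / 2 < l)))
  set T1 := max T0 1 with hT1
  set A : ℕ → ℝ := fun T => ∑ t ∈ Icc 1 T, η t with hA
  have hstep : ∀ T, T1 ≤ T → v T ≤ v T1 + (l / 2) * A T1 - (l / 2) * A T := by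
    intro T hT
    induction T, hT using Nat.le_induction with
    | base => linarith
    | succ T hT ih =>
      have h1 : 1 ≤ T + 1 := by omega
      have hr := hrec (T + 1) h1
      simp only [Nat.add_sub_cancel] at hr
      have hu1 : l / 2 ≤ u (T + 1) := hT0 (T + 1) (by omega)
      have hη1 : 0 < η (T + 1) := hη (T + 1) h1
      have hA1 : A (T + 1) = A T + η (T + 1) := by
        simp only [hA]
        rw [Finset.sum_Icc_succ_top (by omega : 1 ≤ T + 1)]
      nlinarith [mul_le_mul_of_nonneg_left hu1 (le_of_lt hη1)]
  have hbot : Tendsto v atTop atBot := by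
    have h1 : Tendsto (fun T => (l / 2) * A T) atTop atTop :=
      hdiv.const_mul_atTop (by linarith)
    have h2 : Tendsto (fun T => -((l / 2) * A T)) atTop atBot :=
      tendsto_neg_atTop_atBot.comp h1
    have h3 := tendsto_atBot_add_const_left atTop (v T1 + (l / 2) * A T1) h2
    have h4 : Tendsto (fun T => v T1 + (l / 2) * A T1 - (l / 2) * A T) atTop atBot := by
      simpa [sub_eq_add_neg] using h3
    exact tendsto_atBot_mono' atTop (eventually_atTop.mpr ⟨T1, hstep⟩) h4
  exact not_tendsto_atBot_of_tendsto_nhds hv hbot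

end Aux

/-- implicit bias of normalized steepest descent with weight decay. If the
iterates converge to `x_∞`, then `N x_∞ ≤ 1/λ` and `⟪-λ x_∞, ∇L(x_∞)⟫ = ‖∇L(x_∞)‖_*`,
i.e. `x_∞` is a KKT point of `min_{N x ≤ 1/λ} L(x)`. -/
theorem nsd_wd_converges_to_kkt {d : ℕ} (N D : EuclideanSpace ℝ (Fin d) → ℝ)
    (hN : IsNorm N) (hD : IsDualNorm N D) (lam : ℝ) (hlam : 0 < lam)
    (L : EuclideanSpace ℝ (Fin d) → ℝ) (G : EuclideanSpace ℝ (Fin d) → EuclideanSpace ℝ (Fin d))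
    (hG : ∀ y, HasGradientAt L (G y) y) (hGcont : Continuous G)
    (η : ℕ → ℝ) (hη : ∀ t, 1 ≤ t → 0 < η t) (hη' : ∀ t, 1 ≤ t → lam * η t < 1)
    (hdiv : Filter.Tendsto (fun T => ∑ t ∈ Finset.Icc 1 T, η t) Filter.atTop Filter.atTop)
    (x Δ : ℕ → EuclideanSpace ℝ (Fin d)) (xinf : EuclideanSpace ℝ (Fin d))
    (hΔnorm : ∀ t, 1 ≤ t → N (Δ t) = 1)
    (hΔsd : ∀ t, 1 ≤ t → ⟪Δ t, G (x (t - 1))⟫ = D (G (x (t - 1))))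
    (hx : ∀ t, 1 ≤ t → x t = (1 - lam * η t) • x (t - 1) - η t • Δ t)
    (hxconv : Filter.Tendsto x Filter.atTop (nhds xinf)) :
    N xinf ≤ 1 / lam ∧ ⟪-(lam • xinf), G xinf⟫ = D (G xinf) := by
  obtain ⟨m, hm, hmN⟩ := hN.lower
  -- x (T - 1) → xinf
  have hxprev : Tendsto (fun T => x (T - 1)) atTop (nhds xinf) :=
    hxconv.comp (tendsto_sub_atTop_nat 1)
  -- Part 1 : N xinf ≤ 1 / lam
  have part1 : N xinf ≤ 1 / lam := by
    have hNconv : Tendsto (fun T => N (x T)) atTop (nhds (N xinf)) :=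
      (hN.continuous.tendsto xinf).comp hxconv
    have hNprev : Tendsto (fun T => lam * N (x (T - 1)) - 1) atTop
        (nhds (lam * N xinf - 1)) := by
      have := ((hN.continuous.tendsto xinf).comp hxprev).const_mul lam
      exact this.sub_const 1
    have hkey : lam * N xinf - 1 ≤ 0 := by
      refine key_limit η hη hdiv (fun T => lam * N (x (T - 1)) - 1) (fun T => N (x T))
        (lam * N xinf - 1) (N xinf) hNprev hNconv (fun T hT => ?_)
      have hxT := hx T hT
      have htri : N (x T) ≤ (1 - lam * η T) * N (x (T - 1)) + η T := by
        rw [hxT, sub_eq_add_neg]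
        calc N ((1 - lam * η T) • x (T - 1) + -(η T • Δ T)) ≤
            N ((1 - lam * η T) • x (T - 1)) + N (-(η T • Δ T)) := hN.2.2 _ _
          _ = |1 - lam * η T| * N (x (T - 1)) + |η T| * N (Δ T) := by
              rw [hN.neg, hN.2.1, hN.2.1]
          _ = (1 - lam * η T) * N (x (T - 1)) + η T := by
              rw [abs_of_pos (by linarith [hη' T hT]), abs_of_pos (hη T hT), hΔnorm T hT,
                mul_one]
      show N (x T) - N (x (T - 1)) ≤ -(η T * (lam * N (x (T - 1)) - 1))
      nlinarith
    rw [le_div_iff₀ hlam]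
    linarith
  refine ⟨part1, ?_⟩
  -- dual norm facts
  have hub : ∀ g w, N w ≤ 1 → ⟪g, w⟫ ≤ D g := fun g w hw => (hD g).2 ⟨w, hw, rfl⟩
  have hmem : ∀ g, ∃ w, N w ≤ 1 ∧ D g = ⟪g, w⟫ := fun g => (hD g).1
  -- D is Lipschitz, hence continuous
  have hDlip : ∀ g g', D g - D g' ≤ (1 / m) * ‖g - g'‖ := by
    intro g g'
    obtain ⟨w, hw1, hw2⟩ := hmem g
    have hw3 : ‖w‖ ≤ 1 / m := by
      have := hmN w
      rw [le_div_iff₀ hm, mul_comm]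
      linarith
    have h1 : ⟪g', w⟫ ≤ D g' := hub g' w hw1
    have h2 : ⟪g, w⟫ = ⟪g', w⟫ + ⟪g - g', w⟫ := by
      rw [inner_sub_left]; ring
    have h3 : ⟪g - g', w⟫ ≤ ‖g - g'‖ * ‖w‖ := real_inner_le_norm _ _
    have h4 : ‖g - g'‖ * ‖w‖ ≤ ‖g - g'‖ * (1 / m) :=
      mul_le_mul_of_nonneg_left hw3 (norm_nonneg _)
    rw [hw2]
    rw [h2]
    nlinarith
  have hDcont : Continuous D := by
    have : LipschitzWith (Real.toNNReal (1 / m)) D := by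
      refine LipschitzWith.of_dist_le_mul fun a b => ?_
      rw [Real.dist_eq, dist_eq_norm, Real.coe_toNNReal _ (by positivity : (0:ℝ) ≤ 1 / m)]
      rw [abs_sub_le_iff]
      refine ⟨hDlip a b, ?_⟩
      have := hDlip b a
      rwa [norm_sub_rev] at this
    exact this.continuous
  -- limit of ⟪Δ T, G xinf⟫
  have hGprev : Tendsto (fun T => G (x (T - 1))) atTop (nhds (G xinf)) :=
    (hGcont.tendsto xinf).comp hxprev
  have hΔlim : Tendsto (fun T => ⟪Δ T, G xinf⟫) atTop (nhds (D (G xinf))) := by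
    have h1 : Tendsto (fun T => D (G (x (T - 1)))) atTop (nhds (D (G xinf))) :=
      (hDcont.tendsto (G xinf)).comp hGprev
    have h2 : Tendsto (fun T => ⟪Δ T, G xinf - G (x (T - 1))⟫) atTop (nhds 0) := by
      apply squeeze_zero_norm' (a := fun T => (1 / m) * ‖G xinf - G (x (T - 1))‖)
      · filter_upwards [eventually_ge_atTop 1] with T hT
        have hΔb : ‖Δ T‖ ≤ 1 / m := by
          have := hmN (Δ T)
          rw [hΔnorm T hT] at this
          rw [le_div_iff₀ hm, mul_comm]
          linarith
        calc ‖⟪Δ T, G xinf - G (x (T - 1))⟫‖ = |⟪Δ T, G xinf - G (x (T - 1))⟫| := rfl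
          _ ≤ ‖Δ T‖ * ‖G xinf - G (x (T - 1))‖ := abs_real_inner_le_norm _ _
          _ ≤ (1 / m) * ‖G xinf - G (x (T - 1))‖ :=
              mul_le_mul_of_nonneg_right hΔb (norm_nonneg _)
      · have h3 : Tendsto (fun T => G xinf - G (x (T - 1))) atTop (nhds 0) := by
          have := (tendsto_const_nhds (x := G xinf) (f := atTop)).sub hGprev
          simpa using this
        have h4 : Tendsto (fun T => ‖G xinf - G (x (T - 1))‖) atTop (nhds 0) := by
          simpa using h3.norm
        simpa using h4.const_mul (1 / m)
    have h5 : Tendsto (fun T => D (G (x (T - 1))) + ⟪Δ T, G xinf - G (x (T - 1))⟫) atTop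
        (nhds (D (G xinf))) := by
      simpa using h1.add h2
    refine h5.congr' ?_
    filter_upwards [eventually_ge_atTop 1] with T hT
    rw [← hΔsd T hT, inner_sub_right]
    ring
  -- recursion for a T = ⟪x T, G xinf⟫
  set u : ℕ → ℝ := fun T => lam * ⟪x (T - 1), G xinf⟫ + ⟪Δ T, G xinf⟫ with hu_def
  set a : ℕ → ℝ := fun T => ⟪x T, G xinf⟫ with ha_def
  have hulim : Tendsto u atTop (nhds (lam * ⟪xinf, G xinf⟫ + D (G xinf))) := by
    have h1 : Tendsto (fun T => ⟪x (T - 1), G xinf⟫) atTop (nhds ⟪xinf, G xinf⟫) :=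
      (hxprev.inner tendsto_const_nhds)
    exact (h1.const_mul lam).add hΔlim
  have halim : Tendsto a atTop (nhds ⟪xinf, G xinf⟫) :=
    hxconv.inner tendsto_const_nhds
  have hrec : ∀ T, 1 ≤ T → a T - a (T - 1) = -(η T * u T) := by
    intro T hT
    simp only [ha_def, hu_def]
    rw [hx T hT]
    rw [sub_eq_add_neg ((1 - lam * η T) • x (T - 1)) (η T • Δ T)]
    rw [inner_add_left, real_inner_smul_left, inner_neg_left, real_inner_smul_left]
    ring
  have hle1 : lam * ⟪xinf, G xinf⟫ + D (G xinf) ≤ 0 :=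
    key_limit η hη hdiv u a _ _ hulim halim (fun T hT => le_of_eq (hrec T hT))
  have hle2 : -(lam * ⟪xinf, G xinf⟫ + D (G xinf)) ≤ 0 := by
    refine key_limit η hη hdiv (fun T => -(u T)) (fun T => -(a T)) _ _ hulim.neg halim.neg
      (fun T hT => ?_)
    have h := hrec T hT
    show -(a T) - -(a (T - 1)) ≤ -(η T * -(u T))
    linarith
  have heq : lam * ⟪xinf, G xinf⟫ + D (G xinf) = 0 := by linarith
  have : ⟪-(lam • xinf), G xinf⟫ = -(lam * ⟪xinf, G xinf⟫) := by
    rw [inner_neg_left, real_inner_smul_left]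
  rw [this]
  linarith
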